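/- Let a, b be nonempty finite types and let ρ be a complex (a×b)×(a×b) matrix. Define the reduced matrix ρ^{A} on a by ρ^{A}_{i,i'} = Σ_j ρ_{(i,j),(i',j)}. On the two-copy index type (a×b)×(a×b) (i.e., indices are pairs (x₁,x₂) with xᵢ ∈ a×b), define: the tensor product T by T_{(x₁,x₂),(y₁,y₂)} = ρ_{x₁,y₁}·ρ_{x₂,y₂}; the partial swap V which exchanges the a-components of the two copies, V_{((i₁,j₁),(i₂,j₂)),((k₁,l₁),(k₂,l₂))} = 1 if k₁ = i₂, k₂ = i₁, l₁ = j₁, l₂ = j₂, and 0 otherwise; and, for a complex a×a matrix P, the observable Q acting as P on the a-component of the first copy and as the identity elsewhere, Q_{((i₁,j₁),(i₂,j₂)),((k₁,l₁),(k₂,l₂))} = P_{i₁,k₁} if j₁ = l₁, i₂ = k₂, j₂ = l₂, and 0 otherwise. Then Tr[T · V · Q] = Tr[(ρ^{A})² · P]. -/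
import Mathlib

open Matrix
set_option maxHeartbeats 1600000

theorem lvp_partial_swap_trace_identity {a b : Type*}
    [Fintype a] [Fintype b] [DecidableEq a] [DecidableEq b] [Nonempty a] [Nonempty b]
    (ρ : Matrix (a × b) (a × b) ℂ) (P : Matrix a a ℂ) :
    Matrix.trace
      ((Matrix.of fun x y : (a × b) × (a × b) => ρ x.1 y.1 * ρ x.2 y.2) *
        (Matrix.of fun x z : (a × b) × (a × b) =>
          if z.1.1 = x.2.1 ∧ z.2.1 = x.1.1 ∧ z.1.2 = x.1.2 ∧ z.2.2 = x.2.2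
            then (1 : ℂ) else 0) *
        (Matrix.of fun u w : (a × b) × (a × b) =>
          if u.1.2 = w.1.2 ∧ u.2.1 = w.2.1 ∧ u.2.2 = w.2.2 then P u.1.1 w.1.1 else 0))
      = Matrix.trace ((Matrix.of fun i i' : a => ∑ j : b, ρ (i, j) (i', j)) ^ 2 * P) := by
  rw [Matrix.mul_assoc]
  have hVQ : ((Matrix.of fun x z : (a × b) × (a × b) =>
          if z.1.1 = x.2.1 ∧ z.2.1 = x.1.1 ∧ z.1.2 = x.1.2 ∧ z.2.2 = x.2.2
            then (1 : ℂ) else 0) *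
        (Matrix.of fun u w : (a × b) × (a × b) =>
          if u.1.2 = w.1.2 ∧ u.2.1 = w.2.1 ∧ u.2.2 = w.2.2 then P u.1.1 w.1.1 else 0))
      = Matrix.of fun z x : (a × b) × (a × b) =>
          if z.1.2 = x.1.2 ∧ z.1.1 = x.2.1 ∧ z.2.2 = x.2.2 then P z.2.1 x.1.1 else 0 := by
    ext z x
    rw [Matrix.mul_apply, Finset.sum_eq_single ((z.2.1, z.1.2), (z.1.1, z.2.2))]
    · simp
    · rintro ⟨⟨w11, w12⟩, ⟨w21, w22⟩⟩ _ hw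
      simp only [Matrix.of_apply]
      rw [if_neg, zero_mul]
      rintro ⟨h1, h2, h3, h4⟩
      exact hw (by simp_all)
    · simp
  rw [hVQ]
  simp only [Matrix.trace, Matrix.mul_apply, Matrix.diag, Matrix.of_apply, pow_two,
    Fintype.sum_prod_type, ite_and, mul_ite, mul_zero,
    Finset.sum_ite_eq, Finset.sum_ite_eq', Finset.mem_univ, if_true,
    Finset.sum_mul, Finset.mul_sum]
  simp only [Finset.sum_ite_irrel, Finset.sum_const_zero, Finset.sum_ite_eq, Finset.sum_ite_eq', Finset.mem_univ, if_true]
  refine Finset.sum_congr rfl fun x _ => ?_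
  -- LHS: sums over (j, k, j', m); RHS: (m, k, j', j)
  conv_lhs => enter [2, j, 2, k]; rw [Finset.sum_comm]
  conv_lhs => enter [2, j]; rw [Finset.sum_comm]
  conv_lhs => rw [Finset.sum_comm]
  conv_lhs => enter [2, m]; rw [Finset.sum_comm]
  conv_lhs => enter [2, m, 2, k]; rw [Finset.sum_comm]
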